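/- Let u(x) = (x, cosh x)/(x² + cosh² x) for x ∈ ℝ, and v(x) = h(cos x + 1, sin x) for x ∈ (0,π) and some h > 0. Then the only solution of u(x_u) = v(x_v) with x_u ∈ ℝ, x_v ∈ (0,π) is x_u = 1/(2h), x_v = 2 arctan(2h cosh(1/(2h))); moreover at this intersection the tangent vectors are linearly independent: det(u'(x_u) | v'(x_v)) = −4h³ / (2h² + 2h² cosh(1/h) + 1) ≠ 0. -/

import Mathlib

set_option maxHeartbeats 1000000

open Real

theorem elastica_geodesic_unique_transversal_intersection (h : ℝ) (hh : 0 < h) :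
    let u1 : ℝ → ℝ := fun x => x / (x ^ 2 + Real.cosh x ^ 2)
    let u2 : ℝ → ℝ := fun x => Real.cosh x / (x ^ 2 + Real.cosh x ^ 2)
    let v1 : ℝ → ℝ := fun x => h * (Real.cos x + 1)
    let v2 : ℝ → ℝ := fun x => h * Real.sin x
    let xu₀ : ℝ := 1 / (2 * h)
    let xv₀ : ℝ := 2 * Real.arctan (2 * h * Real.cosh (1 / (2 * h)))
    (∀ xu : ℝ, ∀ xv ∈ Set.Ioo 0 Real.pi,
      (u1 xu = v1 xv ∧ u2 xu = v2 xv) ↔ (xu = xu₀ ∧ xv = xv₀)) ∧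
    (deriv u1 xu₀ * deriv v2 xv₀ - deriv u2 xu₀ * deriv v1 xv₀
      = -(4 * h ^ 3) / (2 * h ^ 2 + 2 * h ^ 2 * Real.cosh (1 / h) + 1)) ∧
    -(4 * h ^ 3) / (2 * h ^ 2 + 2 * h ^ 2 * Real.cosh (1 / h) + 1) ≠ 0 := by
  intro u1 u2 v1 v2 xu₀ xv₀
  have hhne : h ≠ 0 := ne_of_gt hh
  set c : ℝ := Real.cosh (1 / (2 * h)) with hcdef
  set s : ℝ := Real.sinh (1 / (2 * h)) with hsdef
  have hc1 : 1 ≤ c := Real.one_le_cosh _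
  have hcpos : 0 < c := lt_of_lt_of_le one_pos hc1
  set t : ℝ := 2 * h * c with htdef
  have htpos : 0 < t := by positivity
  have ht2 : (0:ℝ) < 1 + t ^ 2 := by positivity
  have hD : ∀ x : ℝ, 0 < x ^ 2 + Real.cosh x ^ 2 := fun x => by
    nlinarith [Real.one_le_cosh x, sq_nonneg x]
  have hDne : ∀ x : ℝ, x ^ 2 + Real.cosh x ^ 2 ≠ 0 := fun x => ne_of_gt (hD x)
  have hxu0 : xu₀ = 1 / (2 * h) := rfl
  have hxv0 : xv₀ = 2 * Real.arctan t := rfl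
  have hcxu : Real.cosh xu₀ = c := rfl
  have hsxu : Real.sinh xu₀ = s := rfl
  -- trig values at xv₀
  have hsqrt : Real.sqrt (1 + t ^ 2) ^ 2 = 1 + t ^ 2 := Real.sq_sqrt (le_of_lt ht2)
  have hsqpos : 0 < Real.sqrt (1 + t ^ 2) := Real.sqrt_pos.mpr ht2
  have hcosv : Real.cos xv₀ = (1 - t ^ 2) / (1 + t ^ 2) := by
    rw [hxv0, Real.cos_two_mul, Real.cos_arctan]
    rw [div_pow, one_pow, hsqrt]
    field_simp
    ring
  have hsinv : Real.sin xv₀ = 2 * t / (1 + t ^ 2) := by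
    rw [hxv0, Real.sin_two_mul, Real.sin_arctan, Real.cos_arctan]
    have hmm : Real.sqrt (1 + t ^ 2) * Real.sqrt (1 + t ^ 2) = 1 + t ^ 2 :=
      Real.mul_self_sqrt ht2.le
    rw [show 2 * (t / Real.sqrt (1 + t ^ 2)) * (1 / Real.sqrt (1 + t ^ 2))
        = 2 * t / (Real.sqrt (1 + t ^ 2) * Real.sqrt (1 + t ^ 2)) by ring, hmm]
  -- denominator of the target
  have hden : 2 * h ^ 2 + 2 * h ^ 2 * Real.cosh (1 / h) + 1 = 1 + t ^ 2 := by
    have h2 : (1:ℝ) / h = 2 * (1 / (2 * h)) := by field_simp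
    rw [h2, Real.cosh_two_mul, ← hcdef, ← hsdef]
    have hs2 : s ^ 2 = c ^ 2 - 1 := Real.sinh_sq _
    rw [hs2, htdef]; ring
  have hdenpos : (0:ℝ) < 2 * h ^ 2 + 2 * h ^ 2 * Real.cosh (1 / h) + 1 := by
    rw [hden]; exact ht2
  refine ⟨?_, ?_, ?_⟩
  · -- uniqueness of intersection
    intro xu xv hxv
    constructor
    · rintro ⟨e1, e2⟩
      simp only [u1, v1] at e1
      simp only [u2, v2] at e2
      have hDx := hD xu
      have hpy := Real.sin_sq_add_cos_sq xv
      -- step 1 : xu = 1/(2h)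
      have key : 2 * h * xu = 1 := by
        have h1 : (1:ℝ) / (xu ^ 2 + Real.cosh xu ^ 2)
            = 2 * h * (xu / (xu ^ 2 + Real.cosh xu ^ 2)) := by
          calc (1:ℝ) / (xu ^ 2 + Real.cosh xu ^ 2)
              = (xu / (xu ^ 2 + Real.cosh xu ^ 2)) ^ 2
                + (Real.cosh xu / (xu ^ 2 + Real.cosh xu ^ 2)) ^ 2 := by
                field_simp
            _ = (h * (Real.cos xv + 1)) ^ 2 + (h * Real.sin xv) ^ 2 := by rw [e1, e2]
            _ = 2 * h * (h * (Real.cos xv + 1)) := by nlinarith [hpy]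
            _ = 2 * h * (xu / (xu ^ 2 + Real.cosh xu ^ 2)) := by rw [e1]
        field_simp at h1
        linarith
      have hxu : xu = 1 / (2 * h) := by field_simp; linarith
      refine ⟨hxu, ?_⟩
      -- step 2 : determine xv
      subst hxu
      have hDval : (1 / (2 * h)) ^ 2 + Real.cosh (1 / (2 * h)) ^ 2
          = (1 + t ^ 2) / (2 * h) ^ 2 := by
        rw [← hcdef, htdef]; field_simp
      have hu1 : (1 / (2 * h)) / ((1 / (2 * h)) ^ 2 + Real.cosh (1 / (2 * h)) ^ 2)
          = 2 * h / (1 + t ^ 2) := by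
        rw [hDval]; field_simp
      have hu2 : Real.cosh (1 / (2 * h)) / ((1 / (2 * h)) ^ 2 + Real.cosh (1 / (2 * h)) ^ 2)
          = h * (2 * t / (1 + t ^ 2)) := by
        rw [hDval, ← hcdef, htdef]; field_simp
      rw [hu1] at e1
      rw [hu2] at e2
      have hcosxv : Real.cos xv = (1 - t ^ 2) / (1 + t ^ 2) := by
        have h1 : h * (Real.cos xv + 1) = h * (2 / (1 + t ^ 2)) := by
          rw [← e1]; field_simp
        have h2 := mul_left_cancel₀ hhne h1
        field_simp at h2 ⊢
        linarith
      have hsinxv : Real.sin xv = 2 * t / (1 + t ^ 2) := by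
        have h2 := mul_left_cancel₀ hhne e2.symm
        linarith [h2]
      -- half angle
      have ha1 : 0 < xv / 2 := by linarith [hxv.1]
      have ha2 : xv / 2 < π / 2 := by linarith [hxv.2]
      have hcosa : 0 < Real.cos (xv / 2) :=
        Real.cos_pos_of_mem_Ioo ⟨by linarith [Real.pi_pos], ha2⟩
      have hc2 : Real.cos xv = 2 * Real.cos (xv / 2) ^ 2 - 1 := by
        have := Real.cos_two_mul (xv / 2)
        rwa [show 2 * (xv / 2) = xv by ring] at this
      have hs2 : Real.sin xv = 2 * Real.sin (xv / 2) * Real.cos (xv / 2) := by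
        have := Real.sin_two_mul (xv / 2)
        rwa [show 2 * (xv / 2) = xv by ring] at this
      have hcossq : Real.cos (xv / 2) ^ 2 = 1 / (1 + t ^ 2) := by
        rw [hc2] at hcosxv
        field_simp at hcosxv ⊢
        linarith
      have hsina : Real.sin (xv / 2) = t * Real.cos (xv / 2) := by
        rw [hs2] at hsinxv
        have h3 : 2 * Real.sin (xv / 2) * Real.cos (xv / 2)
            = 2 * (t * Real.cos (xv / 2)) * Real.cos (xv / 2) := by
          rw [hsinxv]
          rw [show 2 * (t * Real.cos (xv / 2)) * Real.cos (xv / 2)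
              = 2 * t * Real.cos (xv / 2) ^ 2 by ring, hcossq]
          ring
        have hcne : Real.cos (xv / 2) ≠ 0 := ne_of_gt hcosa
        exact mul_left_cancel₀ two_ne_zero (mul_right_cancel₀ hcne h3)
      have htan : Real.tan (xv / 2) = t := by
        rw [Real.tan_eq_sin_div_cos, hsina]
        field_simp
      have : Real.arctan (Real.tan (xv / 2)) = xv / 2 :=
        Real.arctan_tan (by linarith) ha2
      rw [htan] at this
      rw [hxv0, this]
      ring
    · rintro ⟨hxu, hxvv⟩
      subst hxu hxvv
      constructor
      · simp only [u1, v1]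
        rw [hcosv, hcxu, hxu0, htdef]
        field_simp
        ring
      · simp only [u2, v2]
        rw [hsinv, hcxu, hxu0, htdef]
        field_simp
  · -- derivative identity
    have hdenD : HasDerivAt (fun x : ℝ => x ^ 2 + Real.cosh x ^ 2)
        (2 * xu₀ + 2 * c * s) xu₀ := by
      have h1 : HasDerivAt (fun x : ℝ => x ^ 2) (2 * xu₀) xu₀ := by
        simpa using hasDerivAt_pow 2 xu₀
      have h2 : HasDerivAt (fun x : ℝ => Real.cosh x ^ 2) (2 * c * s) xu₀ := by
        have h3 := (Real.hasDerivAt_cosh xu₀).pow 2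
        rw [hcxu, hsxu] at h3
        simpa [Pi.pow_def] using h3
      exact h1.add h2
    have hu1d : HasDerivAt (fun x : ℝ => x / (x ^ 2 + Real.cosh x ^ 2))
        ((1 * (xu₀ ^ 2 + c ^ 2) - xu₀ * (2 * xu₀ + 2 * c * s)) / (xu₀ ^ 2 + c ^ 2) ^ 2)
        xu₀ := by
      have h4 := (hasDerivAt_id xu₀).div hdenD (hDne xu₀)
      rw [hcxu] at h4
      simpa [Pi.div_def] using h4
    have hu2d : HasDerivAt (fun x : ℝ => Real.cosh x / (x ^ 2 + Real.cosh x ^ 2))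
        ((s * (xu₀ ^ 2 + c ^ 2) - c * (2 * xu₀ + 2 * c * s)) / (xu₀ ^ 2 + c ^ 2) ^ 2)
        xu₀ := by
      have h4 := (Real.hasDerivAt_cosh xu₀).div hdenD (hDne xu₀)
      rw [hcxu, hsxu] at h4
      simpa [Pi.div_def] using h4
    have hd1 : deriv u1 xu₀
        = (1 * (xu₀ ^ 2 + c ^ 2) - xu₀ * (2 * xu₀ + 2 * c * s)) / (xu₀ ^ 2 + c ^ 2) ^ 2 := by
      simp only [u1]; exact hu1d.deriv
    have hd2 : deriv u2 xu₀
        = (s * (xu₀ ^ 2 + c ^ 2) - c * (2 * xu₀ + 2 * c * s)) / (xu₀ ^ 2 + c ^ 2) ^ 2 := by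
      simp only [u2]; exact hu2d.deriv
    have hd3 : deriv v1 xv₀ = h * (-Real.sin xv₀) := by
      have h4 : HasDerivAt (fun x : ℝ => h * (Real.cos x + 1)) (h * (-Real.sin xv₀)) xv₀ :=
        ((Real.hasDerivAt_cos xv₀).add_const 1).const_mul h
      simp only [v1]; exact h4.deriv
    have hd4 : deriv v2 xv₀ = h * Real.cos xv₀ := by
      have h4 : HasDerivAt (fun x : ℝ => h * Real.sin x) (h * Real.cos xv₀) xv₀ :=
        (Real.hasDerivAt_sin xv₀).const_mul h
      simp only [v2]; exact h4.deriv
    rw [hd1, hd2, hd3, hd4, hcosv, hsinv, hden, hxu0, htdef]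
    have hx2 : (1 / (2 * h)) ^ 2 + c ^ 2 = (1 + (2 * h * c) ^ 2) / (2 * h) ^ 2 := by
      field_simp
    rw [hx2]
    field_simp
    ring
  · apply div_ne_zero
    · exact neg_ne_zero.mpr (by positivity)
    · exact ne_of_gt hdenpos
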